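/- arXiv:math/0403236 — 2 statements merged into one kernel-verified Lean document; each statement's English description precedes it below -/
import Mathlib

section
/- Let A be a C*-algebra, B a unital C*-algebra, and h₁, h₂ : A → B two *-homomorphisms. Let G be a normal subgroup of the unitary group U(B). Suppose (u_n) is a sequence of unitaries in B with lim_{n→∞} ‖u_n* h₁(a) u_n − h₂(a)‖ = 0 for every a ∈ A. If h₁ and h₂ are G-strongly approximately unitarily equivalent, then there exist a strictly increasing sequence n(1) < n(2) < ⋯ of natural numbers and a sequence of unitaries v_k ∈ U(B) such that u_{n(k)}⁻¹ v_k ∈ G for every k and lim_{k→∞} ‖v_k h₁(a) − h₁(a) v_k‖ = 0 for every a ∈ A. -/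
open Filter Topology

/-- Forward direction of Lemma 3.2(2): if `h₂ = lim ad u_n ∘ h₁` and `h₁`, `h₂` are
`G`-strongly approximately unitarily equivalent, then there is a subsequence `u_{n(k)}`
and unitaries `v_k` in the same classes modulo `G` that asymptotically commute
with the range of `h₁`. -/
theorem strong_approx_unitary_equiv_necessary
    {A B : Type*}
    [NonUnitalNormedRing A] [StarRing A] [CStarRing A] [NormedSpace ℂ A]
    [IsScalarTower ℂ A A] [SMulCommClass ℂ A A] [StarModule ℂ A] [CompleteSpace A]
    [NormedRing B] [StarRing B] [CStarRing B] [NormedAlgebra ℂ B]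
    [StarModule ℂ B] [CompleteSpace B]
    (h₁ h₂ : A →⋆ₙₐ[ℂ] B) (G : Subgroup (unitary B)) [G.Normal]
    (u : ℕ → unitary B)
    (hu : ∀ a : A,
      Tendsto (fun n => ‖star (u n : B) * h₁ a * (u n : B) - h₂ a‖) atTop (𝓝 0))
    (hequiv : ∃ w : ℕ → unitary B, (∀ n, w n ∈ G) ∧ ∀ a : A,
      Tendsto (fun n => ‖star (w n : B) * h₁ a * (w n : B) - h₂ a‖) atTop (𝓝 0)) :
    ∃ n : ℕ → ℕ, StrictMono n ∧ ∃ v : ℕ → unitary B,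
      (∀ k, (u (n k))⁻¹ * v k ∈ G) ∧
      ∀ a : A, Tendsto (fun k => ‖(v k : B) * h₁ a - h₁ a * (v k : B)‖) atTop (𝓝 0) := by
  obtain ⟨w, hwG, hw⟩ := hequiv
  refine ⟨id, strictMono_id, fun k => u k * (w k)⁻¹, ?_, ?_⟩
  · intro k
    simpa using G.inv_mem (hwG k)
  · intro a
    have key : ∀ k, ‖((u k * (w k)⁻¹ : unitary B) : B) * h₁ a - h₁ a * (u k * (w k)⁻¹ : unitary B)‖
        ≤ ‖star (w k : B) * h₁ a * (w k : B) - h₂ a‖ + ‖star (u k : B) * h₁ a * (u k : B) - h₂ a‖ := by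
      intro k
      have hcoe : ((u k * (w k)⁻¹ : unitary B) : B) = (u k : B) * star (w k : B) := rfl
      have h1 : ‖((u k * (w k)⁻¹ : unitary B) : B) * h₁ a - h₁ a * (u k * (w k)⁻¹ : unitary B)‖
          = ‖star (w k : B) * h₁ a * (w k : B) - star (u k : B) * h₁ a * (u k : B)‖ := by
        rw [← CStarRing.norm_coe_unitary_mul (star (u k)) _, ← CStarRing.norm_mul_coe_unitary _ (w k)]
        congr 1
        rw [hcoe]
        have hsu : star (u k : B) * (u k : B) = 1 := Unitary.coe_star_mul_self (u k)
        have hsw : star (w k : B) * (w k : B) = 1 := Unitary.coe_star_mul_self (w k)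
        simp only [Unitary.coe_star, sub_mul, mul_sub]
        calc star (u k : B) * ((u k : B) * star (w k : B) * h₁ a) * (w k : B)
              - star (u k : B) * (h₁ a * ((u k : B) * star (w k : B))) * (w k : B)
            = (star (u k : B) * (u k : B)) * (star (w k : B) * h₁ a * (w k : B))
              - star (u k : B) * h₁ a * (u k : B) * (star (w k : B) * (w k : B)) := by
              simp only [mul_assoc]
          _ = _ := by rw [hsu, hsw]; simp
      rw [h1]
      calc ‖star (w k : B) * h₁ a * (w k : B) - star (u k : B) * h₁ a * (u k : B)‖
          = ‖(star (w k : B) * h₁ a * (w k : B) - h₂ a) - (star (u k : B) * h₁ a * (u k : B) - h₂ a)‖ := by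
            rw [sub_sub_sub_cancel_right]
        _ ≤ _ := norm_sub_le _ _
    have hlim : Tendsto (fun k => ‖star (w k : B) * h₁ a * (w k : B) - h₂ a‖
        + ‖star (u k : B) * h₁ a * (u k : B) - h₂ a‖) atTop (𝓝 0) := by
      simpa using (hw a).add (hu a)
    exact squeeze_zero (fun k => norm_nonneg _) key hlim
end

section
/- Let F be an abelian group, let P = ∏_{n∈ℕ} F be the direct product of countably many copies of F, let S ≤ P be the subgroup of finitely supported sequences (the direct sum ⊕_{n∈ℕ} F), and let π : P → P/S be the quotient homomorphism. Then for every finitely generated subgroup T of P/S there exists a group homomorphism f : T → P such that π(f(t)) = t for every t ∈ T. -/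
/-- The subgroup `⊕_{n ∈ ℕ} F` of finitely supported sequences inside `∏_{n ∈ ℕ} F`. -/
def finitelySupported (F : Type*) [AddCommGroup F] : AddSubgroup (ℕ → F) where
  carrier := {x | (Function.support x).Finite}
  add_mem' hx hy := Set.Finite.subset (hx.union hy) (Function.support_add _ _)
  zero_mem' := by simp [Function.support_zero]
  neg_mem' hx := by simpa [Function.support_neg] using hx

open Classical in
/-- Every finitely generated subgroup `T` of `(∏ F)/(⊕ F)` lifts: there is a homomorphism
`f : T → ∏ F` with `π ∘ f = id` on `T`, where `π` is the quotient map. -/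
theorem exists_lift_of_fg_subgroup_quotient
    (F : Type*) [AddCommGroup F]
    (T : AddSubgroup ((ℕ → F) ⧸ finitelySupported F)) (hT : T.FG) :
    ∃ f : T →+ (ℕ → F), ∀ t : T,
      QuotientAddGroup.mk' (finitelySupported F) (f t) = (t : (ℕ → F) ⧸ finitelySupported F) := by
  classical
  set Q := (ℕ → F) ⧸ finitelySupported F
  set π : (ℕ → F) →+ Q := QuotientAddGroup.mk' (finitelySupported F) with hπ
  obtain ⟨s, hs⟩ := hT
  set ι := {q : Q // q ∈ s}
  set g : ι → Q := fun i => (i : Q)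
  -- lifts of the generators
  set x : ι → (ℕ → F) := fun i => Quotient.out (g i) with hxdef
  have hx : ∀ i, π (x i) = g i := fun i => QuotientAddGroup.out_eq' (g i)
  -- the linear map ℤ^ι → ∏ F
  set ψ : (ι → ℤ) →ₗ[ℤ] (ℕ → F) :=
    { toFun := fun a => ∑ i, a i • x i
      map_add' := by
        intro a b
        simp [add_smul, Finset.sum_add_distrib]
      map_smul' := by
        intro z a
        simp [Finset.smul_sum, mul_smul] } with hψ
  set φ : (ι → ℤ) →+ Q := π.comp ψ.toAddMonoidHom with hφ
  have hψsingle : ∀ i : ι, ψ (Pi.single i 1) = x i := by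
    intro i
    simp only [hψ, LinearMap.coe_mk, AddHom.coe_mk]
    rw [Finset.sum_eq_single i]
    · simp
    · intro j _ hj; simp [Pi.single_apply, hj]
    · intro h; exact absurd (Finset.mem_univ i) h
  have hφval : ∀ a, φ a = ∑ i, a i • g i := by
    intro a
    simp only [hφ, AddMonoidHom.coe_comp, Function.comp_apply, LinearMap.toAddMonoidHom_coe,
      hψ, LinearMap.coe_mk, AddHom.coe_mk, map_sum, map_zsmul, hx]
  -- range of φ is T
  have hrange : φ.range = T := by
    apply le_antisymm
    · rintro _ ⟨a, rfl⟩
      rw [hφval]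
      refine AddSubgroup.sum_mem T fun i _ => AddSubgroup.zsmul_mem T ?_ _
      have : g i ∈ AddSubgroup.closure (s : Set Q) :=
        AddSubgroup.subset_closure i.2
      rwa [hs] at this
    · rw [← hs, AddSubgroup.closure_le]
      intro q hq
      refine ⟨Pi.single (⟨q, hq⟩ : ι) 1, ?_⟩
      simp only [hφ, AddMonoidHom.coe_comp, Function.comp_apply, LinearMap.toAddMonoidHom_coe,
        hψsingle]
      exact hx ⟨q, hq⟩
  -- the kernel as a ℤ-submodule is finitely generated
  set K : Submodule ℤ (ι → ℤ) := AddSubgroup.toIntSubmodule φ.ker with hK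
  obtain ⟨r, hr⟩ : K.FG := IsNoetherian.noetherian K
  have hmemK : ∀ a, a ∈ K ↔ π (ψ a) = 0 := by
    intro a
    rw [hK]
    exact Iff.rfl
  have hsupp : ∀ j ∈ r, (Function.support (ψ j)).Finite := by
    intro j hj
    have hjK : j ∈ K := by rw [← hr]; exact Submodule.subset_span hj
    have : π (ψ j) = 0 := (hmemK j).mp hjK
    have : ψ j ∈ finitelySupported F := (QuotientAddGroup.eq_zero_iff _).mp this
    exact this
  -- the bad coordinates
  set U : Set ℕ := ⋃ j ∈ r, Function.support (ψ j) with hUdef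
  have hU : U.Finite := Set.Finite.biUnion r.finite_toSet hsupp
  -- truncation away from U
  set τ : (ℕ → F) →ₗ[ℤ] (ℕ → F) :=
    { toFun := fun y n => if n ∈ U then 0 else y n
      map_add' := by intro y z; funext n; simp only [Pi.add_apply]; split <;> simp
      map_smul' := by intro z y; funext n; simp only [Pi.smul_apply, RingHom.id_apply]
                      split <;> simp } with hτ
  have hτπ : ∀ y, π (τ y) = π y := by
    intro y
    have : τ y - y ∈ finitelySupported F := by
      refine hU.subset ?_
      intro n hn
      simp only [Function.mem_support, Pi.sub_apply, hτ, LinearMap.coe_mk, AddHom.coe_mk] at hn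
      by_contra hnU
      simp [hnU] at hn
    have := (QuotientAddGroup.eq_iff_sub_mem).mpr this
    exact this
  set ψ' : (ι → ℤ) →ₗ[ℤ] (ℕ → F) := τ.comp ψ with hψ'
  have hspan : ∀ a ∈ Submodule.span ℤ (↑r : Set (ι → ℤ)), ψ' a = 0 := by
    intro a ha
    induction ha using Submodule.span_induction with
    | mem j hj =>
      funext n
      simp only [hψ', LinearMap.comp_apply, hτ, LinearMap.coe_mk, AddHom.coe_mk, Pi.zero_apply]
      by_cases h : n ∈ U
      · simp [h]
      · have hn : n ∉ Function.support (ψ j) := fun hn => h (Set.mem_biUnion hj hn)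
        simp only [Function.mem_support, not_not] at hn
        simp [h, hn]
    | zero => simp
    | add y z _ _ hy hz => rw [map_add, hy, hz, add_zero]
    | smul z y _ hy => rw [map_smul, hy, smul_zero]
  have hkerψ' : ∀ a ∈ φ.ker, ψ' a = 0 := fun a ha => hspan a (by rw [hr]; exact ha)
  -- descend ψ' to the quotient by ker φ
  set L : (ι → ℤ) ⧸ φ.ker →+ (ℕ → F) :=
    QuotientAddGroup.lift φ.ker ψ'.toAddMonoidHom hkerψ' with hL
  set e : (ι → ℤ) ⧸ φ.ker ≃+ φ.range := QuotientAddGroup.quotientKerEquivRange φ with he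
  have hcomm : ∀ q : (ι → ℤ) ⧸ φ.ker, π (L q) = ((e q : φ.range) : Q) := by
    intro q
    induction q using QuotientAddGroup.induction_on with
    | H a =>
      have h1 : L (QuotientAddGroup.mk a) = ψ' a := rfl
      have h2 : ((e (QuotientAddGroup.mk a) : φ.range) : Q) = φ a := rfl
      rw [h1, h2]
      have : π (ψ' a) = π (ψ a) := hτπ (ψ a)
      rw [this]
      rfl
  -- assemble the lift
  refine ⟨L.comp ((e.symm.toAddMonoidHom).comp (AddSubgroup.inclusion hrange.ge)), ?_⟩
  intro t
  simp only [AddMonoidHom.coe_comp, Function.comp_apply, AddEquiv.coe_toAddMonoidHom]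
  rw [hcomm, AddEquiv.apply_symm_apply]
  rfl
end
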